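/- Let p be a prime, ω = exp(2πi/p) ∈ ℂ, and f : ℤ/pℤ → ℤ/pℤ a function. Then (1/p) · ∑_{x ∈ ℤ/pℤ} ω^{a·f(x) + b·x} is an algebraic integer for every a, b ∈ ℤ/pℤ if and only if there exist α, β ∈ ℤ/pℤ such that f(x) = α·x + β for all x ∈ ℤ/pℤ. -/

import Mathlib

open Finset Polynomial

section aux
variable {p : ℕ} [Fact p.Prime] {ω : ℂ}

lemma char_add (hprim : IsPrimitiveRoot ω p) (z w : ZMod p) :
    ω ^ (z + w).val = ω ^ z.val * ω ^ w.val := by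
  have hp1 : ω ^ (p : ℕ) = 1 := hprim.pow_eq_one
  rw [ZMod.val_add, ← pow_add]
  conv_rhs => rw [← Nat.mod_add_div (z.val + w.val) p]
  rw [pow_add, pow_mul, hp1, one_pow, mul_one]

lemma sum_char_eq_zero (hprim : IsPrimitiveRoot ω p) : ∑ x : ZMod p, ω ^ x.val = 0 := by
  have hp := (Fact.out : p.Prime)
  have : ∑ x : ZMod p, ω ^ x.val = ∑ i ∈ range p, ω ^ i := by
    refine Finset.sum_nbij' (fun x => x.val) (fun i => (i : ZMod p)) ?_ ?_ ?_ ?_ ?_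
    · intro x _; exact mem_range.2 (ZMod.val_lt x)
    · intro i _; exact mem_univ _
    · intro x _; simp [ZMod.natCast_val, ZMod.cast_id]
    · intro i hi; exact ZMod.val_cast_of_lt (mem_range.1 hi)
    · intro x _; rfl
  rw [this]
  exact hprim.geom_sum_eq_zero hp.one_lt

lemma sum_char_mul (hprim : IsPrimitiveRoot ω p) (c : ZMod p) (hc : c ≠ 0) :
    ∑ x : ZMod p, ω ^ (c * x).val = 0 := by
  rw [Fintype.sum_equiv (Equiv.mulLeft₀ c hc) (fun x => ω ^ (c * x).val)
    (fun y => ω ^ y.val) (fun x => rfl)]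
  exact sum_char_eq_zero hprim

end aux

section key
variable {p : ℕ} [hpf : Fact p.Prime] {ω : ℂ}

lemma key_congruence (hprim : IsPrimitiveRoot ω p) (N : ZMod p → ℤ)
    (h : IsIntegral ℤ ((1 / (p : ℂ)) * ∑ k : ZMod p, (N k : ℂ) * ω ^ k.val)) :
    ∀ k j : ZMod p, ((N k : ZMod p)) = ((N j : ZMod p)) := by
  have hp := hpf.out
  set q : ℕ+ := ⟨p, hp.pos⟩ with hq
  haveI : Fact ((q : ℕ)).Prime := ⟨hp⟩
  set K := CyclotomicField q ℚ with hK
  haveI : IsCyclotomicExtension {(q : ℕ)} ℚ K := CyclotomicField.isCyclotomicExtension q ℚ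
  set ζ : K := IsCyclotomicExtension.zeta q ℚ K with hζdef
  have hζ : IsPrimitiveRoot ζ p := IsCyclotomicExtension.zeta_spec q ℚ K
  set Q : ℤ[X] := ∑ k : ZMod p, C (N k) * X ^ k.val with hQdef
  have haevalQ : ∀ {A : Type} [CommRing A] [Algebra ℤ A] (r : A),
      aeval r Q = ∑ k : ZMod p, algebraMap ℤ A (N k) * r ^ k.val := by
    intro A _ _ r
    rw [hQdef, map_sum]
    refine Finset.sum_congr rfl fun k _ => by rw [map_mul, aeval_C, map_pow, aeval_X]
  -- the minimal polynomial of ζ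
  have hmin : minpoly ℚ ζ = cyclotomic p ℚ := (cyclotomic_eq_minpoly_rat hζ hp.pos).symm
  -- the embedding φ : K →ₐ[ℚ] ℂ with φ ζ = ω
  have hζq : IsPrimitiveRoot ζ (q : ℕ) := IsCyclotomicExtension.zeta_spec q ℚ K
  have hroot : aeval ω (minpoly ℚ ζ) = 0 := by
    rw [hmin, aeval_def, ← Polynomial.eval_map, map_cyclotomic]
    exact hprim.isRoot_cyclotomic hp.pos
  have hex : ∃ φ : K →ₐ[ℚ] ℂ, φ ζ = ω := by
    have hg := hζq.powerBasis_gen ℚ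
    rw [← hg]
    exact ⟨(hζq.powerBasis ℚ).lift ω (by rwa [hg]), (hζq.powerBasis ℚ).lift_gen ω _⟩
  obtain ⟨φ, hφζ⟩ := hex
  have hpK : (p : K) ≠ 0 := Nat.cast_ne_zero.2 hp.ne_zero
  have hpC : (p : ℂ) ≠ 0 := Nat.cast_ne_zero.2 hp.ne_zero
  set zK : K := (p : K)⁻¹ * aeval ζ Q with hzKdef
  have hφz : φ zK = (1 / (p : ℂ)) * ∑ k : ZMod p, (N k : ℂ) * ω ^ k.val := by
    rw [hzKdef, map_mul, map_inv₀, map_natCast, one_div]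
    congr 1
    have : φ (aeval ζ Q) = aeval (φ ζ) Q :=
      (Polynomial.aeval_algHom_apply (φ.restrictScalars ℤ) ζ Q).symm
    rw [this, hφζ, haevalQ]
    refine Finset.sum_congr rfl fun k _ => by rw [algebraMap_int_eq, eq_intCast]
  have hzint : IsIntegral ℤ zK := by
    have hinj : Function.Injective (φ.restrictScalars ℤ) := φ.injective
    rw [← isIntegral_algHom_iff (φ.restrictScalars ℤ) hinj]
    show IsIntegral ℤ (φ zK)
    rw [hφz]; exact h
  haveI hic := IsCyclotomicExtension.Rat.isIntegralClosure_adjoin_singleton_of_prime hζq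
  obtain ⟨y, hy⟩ := (@IsIntegralClosure.isIntegral_iff _ _ _ _ _ _ _ _ hic _
    ).mp hzint
  have hymem : (y : K) ∈ (Polynomial.aeval ζ : Polynomial ℤ →ₐ[ℤ] K).range := by
    rw [← Algebra.adjoin_singleton_eq_range_aeval]; exact y.2
  obtain ⟨P, hP⟩ := hymem
  have hPz : aeval ζ P = zK := by
    have : aeval ζ P = (y : K) := hP
    rw [this]; exact hy
  have hzero : aeval ζ (Q - C (p : ℤ) * P) = 0 := by
    rw [map_sub, map_mul, aeval_C, hPz, hzKdef]
    have : algebraMap ℤ K ((p : ℕ) : ℤ) = (p : K) := by push_cast; simp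
    rw [this, ← mul_assoc, mul_inv_cancel₀ hpK, one_mul, sub_self]
  -- divisibility by the cyclotomic polynomial over ℤ
  have hdvd : cyclotomic p ℤ ∣ Q - C (p : ℤ) * P := by
    have h0 : aeval ζ ((Q - C (p : ℤ) * P).map (Int.castRingHom ℚ)) = 0 := by
      rw [show Int.castRingHom ℚ = algebraMap ℤ ℚ from rfl, aeval_map_algebraMap]
      exact hzero
    have h1 : minpoly ℚ ζ ∣ (Q - C (p : ℤ) * P).map (Int.castRingHom ℚ) :=
      minpoly.dvd ℚ ζ h0
    rw [hmin, ← map_cyclotomic_int p ℚ] at h1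
    exact (map_dvd_map (Int.castRingHom ℚ) Int.cast_injective (cyclotomic.monic p ℤ)).mp h1
  obtain ⟨R, hR⟩ := hdvd
  -- reduce modulo p
  set π := Int.castRingHom (ZMod p) with hπ
  have hmod : Q.map π = cyclotomic p (ZMod p) * R.map π := by
    have := congrArg (Polynomial.map π) hR
    rwa [Polynomial.map_sub, Polynomial.map_mul, Polynomial.map_C,
      show π ((p : ℕ) : ℤ) = 0 by simp, map_zero, zero_mul, sub_zero,
      Polynomial.map_mul, map_cyclotomic] at this
  set Qb := Q.map π with hQb
  set Rb := R.map π with hRb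
  -- degree of Qb is at most p - 1
  have hdegQ : Qb.degree ≤ ((p - 1 : ℕ) : WithBot ℕ) := by
    refine le_trans (Polynomial.degree_map_le) ?_
    rw [hQdef]
    refine le_trans (Polynomial.degree_sum_le _ _) ?_
    refine Finset.sup_le fun k _ => le_trans (Polynomial.degree_C_mul_X_pow_le _ _) ?_
    exact_mod_cast Nat.cast_le.2 (Nat.le_sub_one_of_lt (ZMod.val_lt k))
  -- key multiplicative identity
  have hmul : (X - 1) * Qb = (X ^ p - 1) * Rb := by
    rw [hmod, ← mul_assoc, mul_comm (X - 1) (cyclotomic p (ZMod p)),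
      cyclotomic_prime, geom_sum_mul]
  -- all coefficients of Qb below p are equal
  have hcoeff : ∀ i, i < p → Qb.coeff i = Qb.coeff 0 := by
    rcases eq_or_ne Rb 0 with hR0 | hR0
    · have : Qb = 0 := by rw [hmod, hR0, mul_zero]
      intro i _; rw [this]; simp
    · -- Rb is a nonzero constant
      have hXp : (X ^ p - 1 : (ZMod p)[X]) = (X - 1) ^ p := by
        rw [sub_pow_char]; simp
      have hdeg : Rb.degree ≤ 0 := by
        by_contra hcon
        push_neg at hcon
        have h1 : ((X - 1) * Qb).degree ≤ (p : WithBot ℕ) := by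
          refine le_trans (Polynomial.degree_mul_le _ _) ?_
          have hX1 : ((X : (ZMod p)[X]) - 1).degree ≤ 1 := by
            rw [← Polynomial.C_1]; exact Polynomial.degree_X_sub_C_le 1
          refine le_trans (add_le_add hX1 hdegQ) ?_
          rw [← Nat.cast_one, ← Nat.cast_add]
          exact_mod_cast Nat.cast_le.2 (by have := hp.two_le; omega : 1 + (p - 1) ≤ p)
        have h2 : ((X ^ p - 1 : (ZMod p)[X]) * Rb).degree = p + Rb.degree := by
          rw [Polynomial.degree_mul, hXp, Polynomial.degree_pow,
            show ((X : (ZMod p)[X]) - 1).degree = 1 by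
              rw [← Polynomial.C_1]; exact Polynomial.degree_X_sub_C 1,
            nsmul_eq_mul, mul_one]
        rw [hmul, h2] at h1
        have : (0 : WithBot ℕ) < Rb.degree := hcon
        have hlt : (p : WithBot ℕ) + 0 < (p : WithBot ℕ) + Rb.degree := by
          exact WithBot.add_lt_add_left (by exact_mod_cast WithBot.natCast_ne_bot p) this
        rw [add_zero] at hlt
        exact absurd h1 (not_le.2 hlt)
      obtain ⟨c, hc⟩ : ∃ c, Rb = C c := ⟨_, Polynomial.eq_C_of_degree_le_zero hdeg⟩
      rw [hc] at hmul
      have hstep : ∀ n, n + 1 < p → Qb.coeff (n + 1) = Qb.coeff n := by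
        intro n hn
        have hlhs : ((X - 1) * Qb).coeff (n + 1) = Qb.coeff n - Qb.coeff (n + 1) := by
          rw [sub_mul, one_mul, Polynomial.coeff_sub, Polynomial.coeff_X_mul]
        have hrhs : ((X ^ p - 1 : (ZMod p)[X]) * C c).coeff (n + 1) = 0 := by
          rw [mul_comm, Polynomial.coeff_C_mul, Polynomial.coeff_sub,
            Polynomial.coeff_X_pow, Polynomial.coeff_one]
          rw [if_neg (Nat.ne_of_lt hn), if_neg (by omega : ¬ (n + 1 = 0))]
          simp
        have h1 : Qb.coeff n - Qb.coeff (n + 1) = 0 := by rw [← hlhs, hmul, hrhs]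
        exact (sub_eq_zero.mp h1).symm
      intro i hi
      induction i with
      | zero => rfl
      | succ n ih => rw [hstep n hi, ih (by omega)]
  have hQcoeff : ∀ k : ZMod p, Q.coeff k.val = N k := by
    intro k
    rw [hQdef, Polynomial.finset_sum_coeff]
    rw [Finset.sum_eq_single k]
    · simp [Polynomial.coeff_C_mul, Polynomial.coeff_X_pow]
    · intro k' _ hne
      rw [Polynomial.coeff_C_mul, Polynomial.coeff_X_pow, if_neg, mul_zero]
      exact fun hval => hne (ZMod.val_injective p hval.symm)
    · intro hk; exact absurd (Finset.mem_univ k) hk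
  have hNQb : ∀ k : ZMod p, ((N k : ZMod p)) = Qb.coeff k.val := by
    intro k
    rw [hQb, Polynomial.coeff_map, hQcoeff]
    rfl
  intro k j
  rw [hNQb k, hNQb j, hcoeff _ (ZMod.val_lt k), hcoeff _ (ZMod.val_lt j)]

end key


theorem average_isIntegral_iff_linear
    (p : ℕ) [Fact p.Prime] (ω : ℂ) (hω : ω = Complex.exp (2 * Real.pi * Complex.I / p))
    (f : ZMod p → ZMod p) :
    (∀ a b : ZMod p,
      IsIntegral ℤ ((1 / (p : ℂ)) * ∑ x : ZMod p, ω ^ (a * f x + b * x).val)) ↔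
      ∃ α β : ZMod p, ∀ x : ZMod p, f x = α * x + β := by
  classical
  have hp : p.Prime := Fact.out
  have hprim : IsPrimitiveRoot ω p := hω ▸ Complex.isPrimitiveRoot_exp p hp.ne_zero
  have hpC : (p : ℂ) ≠ 0 := Nat.cast_ne_zero.2 hp.ne_zero
  constructor
  · intro H
    set b : ZMod p := f 0 - f 1 with hb
    set N : ZMod p → ℕ :=
      fun k => (Finset.univ.filter fun x : ZMod p => f x + b * x = k).card with hN
    have hsum : ∑ x : ZMod p, ω ^ (f x + b * x).val
        = ∑ k : ZMod p, (N k : ℂ) * ω ^ k.val := by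
      rw [← Finset.sum_fiberwise' Finset.univ (fun x => f x + b * x) (fun k => ω ^ k.val)]
      refine Finset.sum_congr rfl fun k _ => ?_
      rw [Finset.sum_const, nsmul_eq_mul]
    have hint := H 1 b
    simp only [one_mul] at hint
    have hint2 : IsIntegral ℤ
        ((1 / (p : ℂ)) * ∑ k : ZMod p, (((fun k => (N k : ℤ)) k : ℤ) : ℂ) * ω ^ k.val) := by
      have : ∑ k : ZMod p, (((N k : ℤ)) : ℂ) * ω ^ k.val
          = ∑ k : ZMod p, (N k : ℂ) * ω ^ k.val := by push_cast; rfl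
      rw [this, ← hsum]
      exact hint
    have hcong := key_congruence hprim (fun k => (N k : ℤ)) hint2
    have hcong' : ∀ k : ZMod p, ((N k : ZMod p)) = ((N (f 0) : ZMod p)) := by
      intro k
      have := hcong k (f 0)
      push_cast at this ⊢
      exact this
    have h01 : (0 : ZMod p) ≠ 1 := zero_ne_one
    have hf1 : f 1 + b * 1 = f 0 := by rw [hb]; ring
    have hf0 : f 0 + b * 0 = f 0 := by ring
    have h2 : 2 ≤ N (f 0) := by
      have hsub : ({0, 1} : Finset (ZMod p)) ⊆
          Finset.univ.filter fun x : ZMod p => f x + b * x = f 0 := by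
        intro x hx
        rcases Finset.mem_insert.mp hx with rfl | hx
        · exact Finset.mem_filter.mpr ⟨Finset.mem_univ _, hf0⟩
        · rw [Finset.mem_singleton.mp hx]
          exact Finset.mem_filter.mpr ⟨Finset.mem_univ _, hf1⟩
      have hcard : ({0, 1} : Finset (ZMod p)).card = 2 := by
        rw [Finset.card_insert_of_notMem (by simpa using h01), Finset.card_singleton]
      calc 2 = ({0, 1} : Finset (ZMod p)).card := hcard.symm
        _ ≤ _ := Finset.card_le_card hsub
    have hNle : ∀ k, N k ≤ p := by
      intro k
      calc N k ≤ Finset.univ.card := Finset.card_le_card (Finset.filter_subset _ _)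
        _ = p := by rw [Finset.card_univ, ZMod.card]
    have hsumN : ∑ k : ZMod p, N k = p := by
      have := Finset.card_eq_sum_card_fiberwise
        (f := fun x : ZMod p => f x + b * x) (s := Finset.univ) (t := Finset.univ)
        (fun x _ => Finset.mem_univ _)
      rw [Finset.card_univ, ZMod.card] at this
      exact this.symm
    by_cases hc : N (f 0) = p
    · have huniv : (Finset.univ.filter fun x : ZMod p => f x + b * x = f 0)
          = Finset.univ := by
        apply Finset.eq_univ_of_card
        rw [ZMod.card]
        exact hc
      refine ⟨-b, f 0, fun x => ?_⟩
      have hx0 : x ∈ Finset.univ.filter (fun x : ZMod p => f x + b * x = f 0) := by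
        rw [huniv]; exact Finset.mem_univ x
      have hx : f x + b * x = f 0 := (Finset.mem_filter.mp hx0).2
      linear_combination hx
    · exfalso
      have hlt : N (f 0) < p := lt_of_le_of_ne (hNle _) hc
      have hall : ∀ k, N k = N (f 0) := by
        intro k
        have hk := hcong' k
        rcases lt_or_eq_of_le (hNle k) with hklt | hkp
        · have := (ZMod.natCast_eq_natCast_iff _ _ _).mp hk
          exact ((Nat.mod_eq_of_lt hklt) ▸ (Nat.mod_eq_of_lt hlt) ▸ this : N k = N (f 0))
        · exfalso
          rw [hkp] at hk
          rw [ZMod.natCast_self] at hk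
          have hdvd : p ∣ N (f 0) := (ZMod.natCast_eq_zero_iff _ _).mp hk.symm
          have := Nat.eq_zero_of_dvd_of_lt hdvd hlt
          omega
      have : ∑ k : ZMod p, N k = p * N (f 0) := by
        rw [Finset.sum_congr rfl fun k _ => hall k, Finset.sum_const,
          Finset.card_univ, ZMod.card, smul_eq_mul]
      rw [hsumN] at this
      have h1 : p * N (f 0) = p * 1 := by rw [mul_one, ← this]
      have := Nat.eq_of_mul_eq_mul_left hp.pos h1
      omega
  · rintro ⟨α, β, hf⟩ a b
    have hrw : ∀ x : ZMod p, a * f x + b * x = (a * α + b) * x + a * β := by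
      intro x; rw [hf]; ring
    simp_rw [hrw, char_add hprim]
    rw [← Finset.sum_mul]
    by_cases hc : a * α + b = 0
    · simp_rw [hc, zero_mul, ZMod.val_zero, pow_zero]
      rw [Finset.sum_const, Finset.card_univ, ZMod.card, nsmul_eq_mul, mul_one,
        one_div, ← mul_assoc, inv_mul_cancel₀ hpC, one_mul]
      exact (hprim.isIntegral hp.pos).pow _
    · rw [sum_char_mul hprim _ hc, zero_mul, mul_zero]
      exact isIntegral_zero
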